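/- Let N be an affine subspace of ℝⁿ, let ν* ∈ N, and for y ∈ ℝⁿ define h(y) = ⟨Π(y - ν*)/‖Π(y - ν*)‖⟩ where Π is the orthogonal projection onto the orthogonal complement of N - ν*, ⟨x⟩ denotes ±x normalized so that the first nonzero coordinate of ⟨x⟩ is positive (with ⟨0⟩ = 0), and x/‖x‖ := 0 when x = 0. Then h is a maximal invariant for the group G(N) of transformations y ↦ α(y - ν) + ν' (α ≠ 0, ν, ν' ∈ N): h(g(y)) = h(y) for all g ∈ G(N) and all y, and h(y) = h(y') implies y' = g(y) for some g ∈ G(N). Moreover h does not depend on the choice of ν* ∈ N. -/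

import Mathlib

open Finset

/-- ⟨x⟩: ±x with the sign chosen so that the first nonzero coordinate is positive,
and ⟨0⟩ = 0. -/
noncomputable def brak {n : ℕ} (x : EuclideanSpace ℝ (Fin n)) :
    EuclideanSpace ℝ (Fin n) := by
  classical
  exact
    if h : ∃ i, x i ≠ 0 then
      (if 0 < x ((Finset.univ.filter fun i => x i ≠ 0).min' (by
          obtain ⟨i, hi⟩ := h
          exact ⟨i, by simp [hi]⟩)) then x else -x)
    else 0

lemma brak_spec {n : ℕ} (x : EuclideanSpace ℝ (Fin n)) :
    brak x = x ∨ brak x = -x := by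
  unfold brak
  split_ifs with h h2
  · left; rfl
  · right; rfl
  · left
    push_neg at h
    ext i
    simp [h i]

lemma brak_ne_zero {n : ℕ} {x : EuclideanSpace ℝ (Fin n)} (hx : x ≠ 0) :
    brak x ≠ 0 := by
  rcases brak_spec x with h | h <;> rw [h] <;> simpa using hx

lemma brak_zero {n : ℕ} : brak (0 : EuclideanSpace ℝ (Fin n)) = 0 := by
  unfold brak
  rw [dif_neg]
  push_neg
  intro i
  simp

lemma brak_neg {n : ℕ} (x : EuclideanSpace ℝ (Fin n)) : brak (-x) = brak x := by
  by_cases h : ∃ i, x i ≠ 0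
  · have h' : ∃ i, (-x) i ≠ 0 := by
      obtain ⟨i, hi⟩ := h; exact ⟨i, by simpa using hi⟩
    have hset : (Finset.univ.filter fun i => (-x) i ≠ 0)
        = (Finset.univ.filter fun i => x i ≠ 0) := by
      ext i; simp
    have hmineq : ∀ (s t : Finset (Fin n)) (hs : s.Nonempty) (ht : t.Nonempty),
        s = t → s.min' hs = t.min' ht := by rintro s t hs ht rfl; rfl
    unfold brak
    rw [dif_pos h', dif_pos h]
    have hmin := hmineq _ _
      (by obtain ⟨i, hi⟩ := h'; exact ⟨i, by simpa using hi⟩)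
      (by obtain ⟨i, hi⟩ := h; exact ⟨i, by simp [hi]⟩) hset
    rw [hmin]
    set i₀ := (Finset.univ.filter fun i => x i ≠ 0).min'
      (by obtain ⟨i, hi⟩ := h; exact ⟨i, by simp [hi]⟩) with hi₀
    have hmem : i₀ ∈ (Finset.univ.filter fun i => x i ≠ 0) :=
      Finset.min'_mem _ _
    have hne : x i₀ ≠ 0 := by simpa using hmem
    rcases hne.lt_or_gt with hlt | hlt
    · rw [if_pos (by simpa using hlt), if_neg (not_lt.2 hlt.le)]
    · rw [if_neg (by simpa using not_lt.2 hlt.le), if_pos hlt, neg_neg]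
  · push_neg at h
    have : x = 0 := by ext i; simp [h i]
    simp [this]

lemma brak_smul_normalize {n : ℕ} (α : ℝ) (hα : α ≠ 0)
    (u : EuclideanSpace ℝ (Fin n)) :
    brak (‖α • u‖⁻¹ • (α • u)) = brak (‖u‖⁻¹ • u) := by
  by_cases hu : u = 0
  · simp [hu]
  · have hnu : ‖u‖ ≠ 0 := norm_ne_zero_iff.2 hu
    have hnorm : ‖α • u‖ = |α| * ‖u‖ := by
      rw [norm_smul, Real.norm_eq_abs]
    rw [hnorm, mul_inv, smul_smul]
    rcases hα.lt_or_gt with hlt | hlt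
    · have : |α|⁻¹ * ‖u‖⁻¹ * α = -(‖u‖⁻¹) := by
        rw [abs_of_neg hlt]
        field_simp
      rw [this, neg_smul, brak_neg]
    · have : |α|⁻¹ * ‖u‖⁻¹ * α = ‖u‖⁻¹ := by
        rw [abs_of_pos hlt]
        field_simp
      rw [this]

theorem stmt12 (n : ℕ) (L : Submodule ℝ (EuclideanSpace ℝ (Fin n)))
    (ν : EuclideanSpace ℝ (Fin n)) (N : Set (EuclideanSpace ℝ (Fin n)))
    (hN : N = {x | x - ν ∈ L}) (νs : EuclideanSpace ℝ (Fin n)) (hνs : νs ∈ N) :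
    let P : EuclideanSpace ℝ (Fin n) → EuclideanSpace ℝ (Fin n) :=
      fun y => (Submodule.orthogonalProjectionOnto Lᗮ y : EuclideanSpace ℝ (Fin n))
    let h : EuclideanSpace ℝ (Fin n) → EuclideanSpace ℝ (Fin n) →
        EuclideanSpace ℝ (Fin n) :=
      fun ν₀ y => brak (‖P (y - ν₀)‖⁻¹ • P (y - ν₀))
    (∀ α : ℝ, α ≠ 0 → ∀ ν₁ ∈ N, ∀ ν₂ ∈ N, ∀ y,
        h νs (α • (y - ν₁) + ν₂) = h νs y) ∧
    (∀ y y', h νs y = h νs y' →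
        ∃ α : ℝ, α ≠ 0 ∧ ∃ ν₁ ∈ N, ∃ ν₂ ∈ N, y' = α • (y - ν₁) + ν₂) ∧
    (∀ ν₂ ∈ N, h ν₂ = h νs) := by
  intro P h
  -- membership in N
  have hmemN : ∀ x, x ∈ N ↔ x - ν ∈ L := by intro x; rw [hN]; rfl
  have hνsL : νs - ν ∈ L := (hmemN νs).1 hνs
  -- P kills L
  have hPzero : ∀ z ∈ L, P z = 0 := by
    intro z hz
    have := Submodule.orthogonalProjectionOnto_apply_of_mem_orthogonal
      (K := Lᗮ) (L.le_orthogonal_orthogonal hz)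
    simp only [P, this, Submodule.coe_zero]
  -- kernel of P is L
  have hPker : ∀ z, P z = 0 → z ∈ L := by
    intro z hz
    have h0 : Submodule.orthogonalProjectionOnto Lᗮ z = 0 := by
      ext1
      simpa [P] using hz
    rw [Submodule.orthogonalProjectionOnto_eq_zero_iff] at h0
    rwa [Submodule.orthogonal_orthogonal] at h0
  -- linearity of P
  have Padd : ∀ a b, P (a + b) = P a + P b := by
    intro a b; simp only [P, map_add, Submodule.coe_add]
  have Psmul : ∀ (c : ℝ) a, P (c • a) = c • P a := by
    intro c a; simp only [P, map_smul, Submodule.coe_smul]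
  have Psub : ∀ a b, P (a - b) = P a - P b := by
    intro a b; simp only [P, map_sub, Submodule.coe_sub]
  -- differences of points in N lie in L
  have hdiffL : ∀ x ∈ N, ∀ x' ∈ N, x - x' ∈ L := by
    intro x hx x' hx'
    have : x - x' = (x - ν) - (x' - ν) := by abel
    rw [this]
    exact L.sub_mem ((hmemN x).1 hx) ((hmemN x').1 hx')
  refine ⟨?_, ?_, ?_⟩
  · -- invariance
    intro α hα ν₁ hν₁ ν₂ hν₂ y
    have hdecomp : α • (y - ν₁) + ν₂ - νs
        = α • (y - νs) + ((ν₂ - νs) - α • (ν₁ - νs)) := by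
      rw [smul_sub, smul_sub, smul_sub]
      abel
    have hPeq : P (α • (y - ν₁) + ν₂ - νs) = α • P (y - νs) := by
      rw [hdecomp, Padd, Psmul]
      have : P ((ν₂ - νs) - α • (ν₁ - νs)) = 0 :=
        hPzero _ (L.sub_mem (hdiffL _ hν₂ _ hνs)
          (L.smul_mem α (hdiffL _ hν₁ _ hνs)))
      rw [this, add_zero]
    show brak _ = brak _
    rw [hPeq]
    exact brak_smul_normalize α hα _
  · -- maximality
    intro y y' hyy'
    set u := P (y - νs) with hu
    set u' := P (y' - νs) with hu'
    have hb : brak (‖u‖⁻¹ • u) = brak (‖u'‖⁻¹ • u') := hyy'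
    by_cases hu0 : u = 0
    · have hu'0 : u' = 0 := by
        by_contra hne
        have h1 : brak (‖u‖⁻¹ • u) = 0 := by rw [hu0]; simp [brak_zero]
        have h2 : brak (‖u'‖⁻¹ • u') ≠ 0 :=
          brak_ne_zero (smul_ne_zero (inv_ne_zero (norm_ne_zero_iff.2 hne)) hne)
        exact h2 (hb.symm.trans h1)
      have hyN : y ∈ N := by
        rw [hmemN]
        have : y - ν = (y - νs) + (νs - ν) := by abel
        rw [this]
        exact L.add_mem (hPker _ hu0) hνsL
      have hy'N : y' ∈ N := by
        rw [hmemN]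
        have : y' - ν = (y' - νs) + (νs - ν) := by abel
        rw [this]
        exact L.add_mem (hPker _ hu'0) hνsL
      exact ⟨1, one_ne_zero, y, hyN, y', hy'N, by simp⟩
    · have hnu : ‖u‖ ≠ 0 := norm_ne_zero_iff.2 hu0
      have hu'0 : u' ≠ 0 := by
        intro hz
        have h2 : brak (‖u'‖⁻¹ • u') = 0 := by rw [hz]; simp [brak_zero]
        have h1 : brak (‖u‖⁻¹ • u) ≠ 0 :=
          brak_ne_zero (smul_ne_zero (inv_ne_zero hnu) hu0)
        exact h1 (hb.trans h2)
      have hnu' : ‖u'‖ ≠ 0 := norm_ne_zero_iff.2 hu'0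
      have hsc : ∃ c : ℝ, c ≠ 0 ∧ u' = c • u := by
        have key : ∃ s : ℝ, s ≠ 0 ∧ ‖u‖⁻¹ • u = s • u' := by
          rcases brak_spec (‖u‖⁻¹ • u) with e1 | e1 <;>
            rcases brak_spec (‖u'‖⁻¹ • u') with e2 | e2
          · exact ⟨‖u'‖⁻¹, inv_ne_zero hnu', by rw [← e1, hb, e2]⟩
          · refine ⟨-‖u'‖⁻¹, by simpa using hnu', ?_⟩
            rw [neg_smul, ← e2, ← hb, e1]
          · refine ⟨-‖u'‖⁻¹, by simpa using hnu', ?_⟩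
            rw [neg_smul, ← e2, ← hb, e1, neg_neg]
          · refine ⟨‖u'‖⁻¹, inv_ne_zero hnu', ?_⟩
            have := congrArg Neg.neg (e1.symm.trans (hb.trans e2))
            simpa using this
        obtain ⟨s, hs, e⟩ := key
        refine ⟨s⁻¹ * ‖u‖⁻¹, mul_ne_zero (inv_ne_zero hs) (inv_ne_zero hnu), ?_⟩
        rw [mul_smul, e, smul_smul, inv_mul_cancel₀ hs, one_smul]
      obtain ⟨c, hc, hcu⟩ := hsc
      refine ⟨c, hc, νs, hνs, y' - c • (y - νs), ?_, by abel⟩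
      rw [hmemN]
      have hdec : y' - c • (y - νs) - ν
          = ((y' - νs) - c • (y - νs)) + (νs - ν) := by abel
      rw [hdec]
      refine L.add_mem (hPker _ ?_) hνsL
      rw [Psub, Psmul, ← hu, ← hu', hcu, sub_self]
  · -- independence of base point
    intro ν₂ hν₂
    funext y
    show brak _ = brak _
    have : P (y - ν₂) = P (y - νs) := by
      have hdec : y - ν₂ = (y - νs) + (νs - ν₂) := by abel
      rw [hdec, Padd, hPzero _ (hdiffL _ hνs _ hν₂), add_zero]
    rw [this]
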